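/- Let K be a field of characteristic 0 and K_{>0} a multiplicative subgroup of K* closed under addition. For subtraction-free rational functions f, g ∈ K(x)_{>0} in variables x = (x_i)_{i∈I}, the piecewise linear tropicalization M satisfies: M(fg) = M(f) + M(g), M(f/g) = M(f) − M(g), and M(f+g) = max{M(f), M(g)}. Analogously, m(fg) = m(f) + m(g), m(f/g) = m(f) − m(g), and m(f+g) = min{m(f), m(g)}. -/

import Mathlib

/-- A polynomial is positive (w.r.t. the cone `P ⊆ K`) if it is nonzero and all its
nonzero coefficients lie in `P`. -/
def PosPoly {K : Type*} [CommSemiring K] {I : Type*} (P : Set K)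
    (a : MvPolynomial I K) : Prop :=
  a ≠ 0 ∧ ∀ α, MvPolynomial.coeff α a ≠ 0 → MvPolynomial.coeff α a ∈ P

/-- Max-tropicalization of a polynomial: `x ↦ max{⟨α, x⟩ : α ∈ supp a}`. -/
noncomputable def tropMax {K : Type*} [CommSemiring K] {I : Type*}
    (a : MvPolynomial I K) (x : I → ℝ) : ℝ :=
  if h : a.support.Nonempty then
    a.support.sup' h (fun α => α.sum fun i k => (k : ℝ) * x i)
  else 0

/-- Min-tropicalization of a polynomial: `x ↦ min{⟨α, x⟩ : α ∈ supp a}`. -/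
noncomputable def tropMin {K : Type*} [CommSemiring K] {I : Type*}
    (a : MvPolynomial I K) (x : I → ℝ) : ℝ :=
  if h : a.support.Nonempty then
    a.support.inf' h (fun α => α.sum fun i k => (k : ℝ) * x i)
  else 0

section Aux

variable {K : Type*} [Field K] {I : Type*} {P : Set K}

lemma myL_add (x : I → ℝ) (α β : I →₀ ℕ) :
    ((α + β).sum fun i k => (k : ℝ) * x i) =
      (α.sum fun i k => (k : ℝ) * x i) + (β.sum fun i k => (k : ℝ) * x i) := by
  rw [Finsupp.sum_add_index'] <;> intros <;> push_cast <;> ring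

lemma sum_mem_P0 (hPadd : ∀ a ∈ P, ∀ b ∈ P, a + b ∈ P)
    {ι : Type*} (s : Finset ι) (f : ι → K) (h : ∀ i ∈ s, f i = 0 ∨ f i ∈ P) :
    s.sum f = 0 ∨ s.sum f ∈ P := by
  classical
  induction s using Finset.cons_induction with
  | empty => left; simp
  | cons j s hj ih =>
    rw [Finset.sum_cons]
    rcases h j (Finset.mem_cons_self _ _) with h0 | hp
    · rw [h0, zero_add]; exact ih fun i hi => h i (Finset.mem_cons_of_mem hi)
    · rcases ih (fun i hi => h i (Finset.mem_cons_of_mem hi)) with h0 | hs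
      · right; rw [h0, add_zero]; exact hp
      · right; exact hPadd _ hp _ hs

lemma coeff_mem_P0 {a : MvPolynomial I K} (ha : PosPoly P a) (α : I →₀ ℕ) :
    MvPolynomial.coeff α a = 0 ∨ MvPolynomial.coeff α a ∈ P := by
  by_cases h : MvPolynomial.coeff α a = 0
  · exact Or.inl h
  · exact Or.inr (ha.2 α h)

lemma coeff_mul_add_mem (hPmul : ∀ a ∈ P, ∀ b ∈ P, a * b ∈ P)
    (hPadd : ∀ a ∈ P, ∀ b ∈ P, a + b ∈ P)
    {a b : MvPolynomial I K} (ha : PosPoly P a) (hb : PosPoly P b)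
    {α β : I →₀ ℕ} (hα : α ∈ a.support) (hβ : β ∈ b.support) :
    MvPolynomial.coeff (α + β) (a * b) ∈ P := by
  classical
  rw [MvPolynomial.coeff_mul]
  have hmem : ((α, β) : (I →₀ ℕ) × (I →₀ ℕ)) ∈ Finset.HasAntidiagonal.antidiagonal (α + β) := by
    simp [Finset.HasAntidiagonal.mem_antidiagonal]
  rw [← Finset.add_sum_erase _ _ hmem]
  have hterm : MvPolynomial.coeff α a * MvPolynomial.coeff β b ∈ P :=
    hPmul _ (ha.2 α (MvPolynomial.mem_support_iff.1 hα)) _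
      (hb.2 β (MvPolynomial.mem_support_iff.1 hβ))
  have hrest := sum_mem_P0 hPadd ((Finset.HasAntidiagonal.antidiagonal (α + β)).erase (α, β))
    (fun p => MvPolynomial.coeff p.1 a * MvPolynomial.coeff p.2 b) (fun p _ => by
      rcases coeff_mem_P0 ha p.1 with h1 | h1
      · left; simp [h1]
      rcases coeff_mem_P0 hb p.2 with h2 | h2
      · left; simp [h2]
      · right; exact hPmul _ h1 _ h2)
  rcases hrest with h0 | hs
  · rw [h0, add_zero]; exact hterm
  · exact hPadd _ hterm _ hs

lemma posPoly_mul (hPmul : ∀ a ∈ P, ∀ b ∈ P, a * b ∈ P)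
    (hPadd : ∀ a ∈ P, ∀ b ∈ P, a + b ∈ P)
    {a b : MvPolynomial I K} (ha : PosPoly P a) (hb : PosPoly P b) :
    PosPoly P (a * b) := by
  classical
  refine ⟨mul_ne_zero ha.1 hb.1, fun γ h => ?_⟩
  rw [MvPolynomial.coeff_mul] at h ⊢
  refine (sum_mem_P0 hPadd _ _ (fun p _ => ?_)).resolve_left h
  rcases coeff_mem_P0 ha p.1 with h1 | h1
  · left; simp [h1]
  rcases coeff_mem_P0 hb p.2 with h2 | h2
  · left; simp [h2]
  · right; exact hPmul _ h1 _ h2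

lemma coeff_add_mem (hPadd : ∀ a ∈ P, ∀ b ∈ P, a + b ∈ P)
    {a b : MvPolynomial I K} (ha : PosPoly P a) (hb : PosPoly P b)
    {γ : I →₀ ℕ} (h : MvPolynomial.coeff γ a ≠ 0 ∨ MvPolynomial.coeff γ b ≠ 0) :
    MvPolynomial.coeff γ (a + b) ∈ P := by
  rw [MvPolynomial.coeff_add]
  rcases coeff_mem_P0 ha γ with h1 | h1 <;> rcases coeff_mem_P0 hb γ with h2 | h2
  · exact absurd h (by simp [h1, h2])
  · rw [h1, zero_add]; exact h2
  · rw [h2, add_zero]; exact h1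
  · exact hPadd _ h1 _ h2

lemma posPoly_add (hP0 : ∀ c ∈ P, c ≠ 0) (hPadd : ∀ a ∈ P, ∀ b ∈ P, a + b ∈ P)
    {a b : MvPolynomial I K} (ha : PosPoly P a) (hb : PosPoly P b) :
    PosPoly P (a + b) := by
  constructor
  · obtain ⟨α, hα⟩ := (MvPolynomial.support_nonempty).2 ha.1
    intro h
    have := coeff_add_mem hPadd ha hb (Or.inl (MvPolynomial.mem_support_iff.1 hα))
    rw [h] at this
    exact hP0 _ this (by simp)
  · intro γ h
    apply coeff_add_mem hPadd ha hb
    by_contra hc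
    push_neg at hc
    rw [MvPolynomial.coeff_add, hc.1, hc.2, add_zero] at h
    exact h rfl

lemma tropMax_mul (hP0 : ∀ c ∈ P, c ≠ 0) (hPmul : ∀ a ∈ P, ∀ b ∈ P, a * b ∈ P)
    (hPadd : ∀ a ∈ P, ∀ b ∈ P, a + b ∈ P)
    {a b : MvPolynomial I K} (ha : PosPoly P a) (hb : PosPoly P b) (x : I → ℝ) :
    tropMax (a * b) x = tropMax a x + tropMax b x := by
  classical
  have hsa : a.support.Nonempty := MvPolynomial.support_nonempty.2 ha.1
  have hsb : b.support.Nonempty := MvPolynomial.support_nonempty.2 hb.1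
  have hsab : (a * b).support.Nonempty :=
    MvPolynomial.support_nonempty.2 (mul_ne_zero ha.1 hb.1)
  set Lf : (I →₀ ℕ) → ℝ := fun α => α.sum fun i k => (k : ℝ) * x i with hLf
  rw [tropMax, tropMax, tropMax, dif_pos hsa, dif_pos hsb, dif_pos hsab]
  apply le_antisymm
  · apply Finset.sup'_le
    intro γ hγ
    have hγ' := MvPolynomial.mem_support_iff.1 hγ
    rw [MvPolynomial.coeff_mul] at hγ'
    obtain ⟨p, hp, hne⟩ := Finset.exists_ne_zero_of_sum_ne_zero hγ'
    have h1 : MvPolynomial.coeff p.1 a ≠ 0 := left_ne_zero_of_mul hne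
    have h2 : MvPolynomial.coeff p.2 b ≠ 0 := right_ne_zero_of_mul hne
    have hγeq : γ = p.1 + p.2 := (Finset.HasAntidiagonal.mem_antidiagonal.1 hp).symm
    have : Lf γ = Lf p.1 + Lf p.2 := by rw [hγeq]; exact myL_add x p.1 p.2
    exact le_trans (le_of_eq this)
      (add_le_add (Finset.le_sup' Lf (MvPolynomial.mem_support_iff.2 h1))
        (Finset.le_sup' Lf (MvPolynomial.mem_support_iff.2 h2)))
  · obtain ⟨α₀, hα₀, hEa⟩ := Finset.exists_mem_eq_sup' hsa Lf
    obtain ⟨β₀, hβ₀, hEb⟩ := Finset.exists_mem_eq_sup' hsb Lf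
    have : Lf (α₀ + β₀) = Lf α₀ + Lf β₀ := myL_add x α₀ β₀
    rw [hEa, hEb, ← this]
    exact Finset.le_sup' Lf (MvPolynomial.mem_support_iff.2
      (hP0 _ (coeff_mul_add_mem hPmul hPadd ha hb hα₀ hβ₀)))

lemma tropMin_mul (hP0 : ∀ c ∈ P, c ≠ 0) (hPmul : ∀ a ∈ P, ∀ b ∈ P, a * b ∈ P)
    (hPadd : ∀ a ∈ P, ∀ b ∈ P, a + b ∈ P)
    {a b : MvPolynomial I K} (ha : PosPoly P a) (hb : PosPoly P b) (x : I → ℝ) :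
    tropMin (a * b) x = tropMin a x + tropMin b x := by
  classical
  have hsa : a.support.Nonempty := MvPolynomial.support_nonempty.2 ha.1
  have hsb : b.support.Nonempty := MvPolynomial.support_nonempty.2 hb.1
  have hsab : (a * b).support.Nonempty :=
    MvPolynomial.support_nonempty.2 (mul_ne_zero ha.1 hb.1)
  set Lf : (I →₀ ℕ) → ℝ := fun α => α.sum fun i k => (k : ℝ) * x i with hLf
  rw [tropMin, tropMin, tropMin, dif_pos hsa, dif_pos hsb, dif_pos hsab]
  apply le_antisymm
  · obtain ⟨α₀, hα₀, hEa⟩ := Finset.exists_mem_eq_inf' hsa Lf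
    obtain ⟨β₀, hβ₀, hEb⟩ := Finset.exists_mem_eq_inf' hsb Lf
    have : Lf (α₀ + β₀) = Lf α₀ + Lf β₀ := myL_add x α₀ β₀
    rw [hEa, hEb, ← this]
    exact Finset.inf'_le Lf (MvPolynomial.mem_support_iff.2
      (hP0 _ (coeff_mul_add_mem hPmul hPadd ha hb hα₀ hβ₀)))
  · apply Finset.le_inf'
    intro γ hγ
    have hγ' := MvPolynomial.mem_support_iff.1 hγ
    rw [MvPolynomial.coeff_mul] at hγ'
    obtain ⟨p, hp, hne⟩ := Finset.exists_ne_zero_of_sum_ne_zero hγ'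
    have h1 : MvPolynomial.coeff p.1 a ≠ 0 := left_ne_zero_of_mul hne
    have h2 : MvPolynomial.coeff p.2 b ≠ 0 := right_ne_zero_of_mul hne
    have hγeq : γ = p.1 + p.2 := (Finset.HasAntidiagonal.mem_antidiagonal.1 hp).symm
    have : Lf γ = Lf p.1 + Lf p.2 := by rw [hγeq]; exact myL_add x p.1 p.2
    exact le_trans (add_le_add (Finset.inf'_le Lf (MvPolynomial.mem_support_iff.2 h1))
        (Finset.inf'_le Lf (MvPolynomial.mem_support_iff.2 h2))) (le_of_eq this.symm)

lemma tropMax_add (hP0 : ∀ c ∈ P, c ≠ 0) (hPadd : ∀ a ∈ P, ∀ b ∈ P, a + b ∈ P)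
    {a b : MvPolynomial I K} (ha : PosPoly P a) (hb : PosPoly P b) (x : I → ℝ) :
    tropMax (a + b) x = max (tropMax a x) (tropMax b x) := by
  have hsa : a.support.Nonempty := MvPolynomial.support_nonempty.2 ha.1
  have hsb : b.support.Nonempty := MvPolynomial.support_nonempty.2 hb.1
  have hsab : (a + b).support.Nonempty :=
    MvPolynomial.support_nonempty.2 (posPoly_add hP0 hPadd ha hb).1
  set Lf : (I →₀ ℕ) → ℝ := fun α => α.sum fun i k => (k : ℝ) * x i with hLf
  rw [tropMax, tropMax, tropMax, dif_pos hsa, dif_pos hsb, dif_pos hsab]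
  apply le_antisymm
  · apply Finset.sup'_le
    intro γ hγ
    have hγ' := MvPolynomial.mem_support_iff.1 hγ
    have : MvPolynomial.coeff γ a ≠ 0 ∨ MvPolynomial.coeff γ b ≠ 0 := by
      by_contra hc
      push_neg at hc
      rw [MvPolynomial.coeff_add, hc.1, hc.2, add_zero] at hγ'
      exact hγ' rfl
    rcases this with h | h
    · exact le_max_of_le_left (Finset.le_sup' Lf (MvPolynomial.mem_support_iff.2 h))
    · exact le_max_of_le_right (Finset.le_sup' Lf (MvPolynomial.mem_support_iff.2 h))
  · apply max_le <;> apply Finset.sup'_le <;> intro γ hγ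
    · exact Finset.le_sup' Lf (MvPolynomial.mem_support_iff.2 (hP0 _
        (coeff_add_mem hPadd ha hb (Or.inl (MvPolynomial.mem_support_iff.1 hγ)))))
    · exact Finset.le_sup' Lf (MvPolynomial.mem_support_iff.2 (hP0 _
        (coeff_add_mem hPadd ha hb (Or.inr (MvPolynomial.mem_support_iff.1 hγ)))))

lemma tropMin_add (hP0 : ∀ c ∈ P, c ≠ 0) (hPadd : ∀ a ∈ P, ∀ b ∈ P, a + b ∈ P)
    {a b : MvPolynomial I K} (ha : PosPoly P a) (hb : PosPoly P b) (x : I → ℝ) :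
    tropMin (a + b) x = min (tropMin a x) (tropMin b x) := by
  have hsa : a.support.Nonempty := MvPolynomial.support_nonempty.2 ha.1
  have hsb : b.support.Nonempty := MvPolynomial.support_nonempty.2 hb.1
  have hsab : (a + b).support.Nonempty :=
    MvPolynomial.support_nonempty.2 (posPoly_add hP0 hPadd ha hb).1
  set Lf : (I →₀ ℕ) → ℝ := fun α => α.sum fun i k => (k : ℝ) * x i with hLf
  rw [tropMin, tropMin, tropMin, dif_pos hsa, dif_pos hsb, dif_pos hsab]
  apply le_antisymm
  · apply le_min <;> apply Finset.le_inf' <;> intro γ hγ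
    · exact Finset.inf'_le Lf (MvPolynomial.mem_support_iff.2 (hP0 _
        (coeff_add_mem hPadd ha hb (Or.inl (MvPolynomial.mem_support_iff.1 hγ)))))
    · exact Finset.inf'_le Lf (MvPolynomial.mem_support_iff.2 (hP0 _
        (coeff_add_mem hPadd ha hb (Or.inr (MvPolynomial.mem_support_iff.1 hγ)))))
  · apply Finset.le_inf'
    intro γ hγ
    have hγ' := MvPolynomial.mem_support_iff.1 hγ
    have : MvPolynomial.coeff γ a ≠ 0 ∨ MvPolynomial.coeff γ b ≠ 0 := by
      by_contra hc
      push_neg at hc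
      rw [MvPolynomial.coeff_add, hc.1, hc.2, add_zero] at hγ'
      exact hγ' rfl
    rcases this with h | h
    · exact min_le_of_left_le (Finset.inf'_le Lf (MvPolynomial.mem_support_iff.2 h))
    · exact min_le_of_right_le (Finset.inf'_le Lf (MvPolynomial.mem_support_iff.2 h))

end Aux


set_option synthInstance.maxHeartbeats 1000000

/-- `F` is the max-tropicalization `M(f)` of the subtraction-free rational function `f`,
via some subtraction-free representation `f = a/b`. -/
def IsMTropOf {K : Type*} [Field K] {I : Type*} (P : Set K)
    (f : FractionRing (MvPolynomial I K)) (F : (I → ℝ) → ℝ) : Prop :=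
  ∃ a b : MvPolynomial I K, PosPoly P a ∧ PosPoly P b ∧
    f = algebraMap (MvPolynomial I K) (FractionRing (MvPolynomial I K)) a /
        algebraMap (MvPolynomial I K) (FractionRing (MvPolynomial I K)) b ∧
    F = fun x => tropMax a x - tropMax b x

/-- `F` is the min-tropicalization `m(f)` of `f`. -/
def IsmTropOf {K : Type*} [Field K] {I : Type*} (P : Set K)
    (f : FractionRing (MvPolynomial I K)) (F : (I → ℝ) → ℝ) : Prop :=
  ∃ a b : MvPolynomial I K, PosPoly P a ∧ PosPoly P b ∧
    f = algebraMap (MvPolynomial I K) (FractionRing (MvPolynomial I K)) a /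
        algebraMap (MvPolynomial I K) (FractionRing (MvPolynomial I K)) b ∧
    F = fun x => tropMin a x - tropMin b x

/-- for subtraction-free rational functions `f, g`,
`M(fg) = M(f) + M(g)`, `M(f/g) = M(f) − M(g)`, `M(f+g) = max{M(f), M(g)}`, and the
analogous identities for `m` with `min`. -/
theorem tropical_rsk_stmt7 {K : Type*} [Field K] [CharZero K] {I : Type*}
    (P : Set K) (hP0 : ∀ c ∈ P, c ≠ 0) (hP1 : (1 : K) ∈ P)
    (hPmul : ∀ a ∈ P, ∀ b ∈ P, a * b ∈ P) (hPinv : ∀ a ∈ P, a⁻¹ ∈ P)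
    (hPadd : ∀ a ∈ P, ∀ b ∈ P, a + b ∈ P)
    (f g : FractionRing (MvPolynomial I K)) (F G : (I → ℝ) → ℝ) :
    (IsMTropOf P f F → IsMTropOf P g G →
      IsMTropOf P (f * g) (fun x => F x + G x) ∧
      IsMTropOf P (f / g) (fun x => F x - G x) ∧
      IsMTropOf P (f + g) (fun x => max (F x) (G x))) ∧
    (IsmTropOf P f F → IsmTropOf P g G →
      IsmTropOf P (f * g) (fun x => F x + G x) ∧
      IsmTropOf P (f / g) (fun x => F x - G x) ∧
      IsmTropOf P (f + g) (fun x => min (F x) (G x))) := by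
  set φ := algebraMap (MvPolynomial I K) (FractionRing (MvPolynomial I K)) with hφ
  have hinj : Function.Injective φ := IsFractionRing.injective _ _
  constructor
  · rintro ⟨a, b, haP, hbP, hf, hF⟩ ⟨c, d, hcP, hdP, hg, hG⟩
    have hb : φ b ≠ 0 := fun h => hbP.1 (hinj (by rw [h, map_zero]))
    have hc : φ c ≠ 0 := fun h => hcP.1 (hinj (by rw [h, map_zero]))
    have hd : φ d ≠ 0 := fun h => hdP.1 (hinj (by rw [h, map_zero]))
    refine ⟨⟨a * c, b * d, posPoly_mul hPmul hPadd haP hcP, posPoly_mul hPmul hPadd hbP hdP,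
        ?_, ?_⟩,
      ⟨a * d, b * c, posPoly_mul hPmul hPadd haP hdP, posPoly_mul hPmul hPadd hbP hcP,
        ?_, ?_⟩,
      ⟨a * d + b * c, b * d, posPoly_add hP0 hPadd (posPoly_mul hPmul hPadd haP hdP)
          (posPoly_mul hPmul hPadd hbP hcP), posPoly_mul hPmul hPadd hbP hdP, ?_, ?_⟩⟩
    · rw [hf, hg, map_mul, map_mul, div_mul_div_comm]
    · funext x
      rw [hF, hG]
      simp only
      rw [tropMax_mul hP0 hPmul hPadd haP hcP, tropMax_mul hP0 hPmul hPadd hbP hdP]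
      ring
    · rw [hf, hg, map_mul, map_mul]
      field_simp
    · funext x
      rw [hF, hG]
      simp only
      rw [tropMax_mul hP0 hPmul hPadd haP hdP, tropMax_mul hP0 hPmul hPadd hbP hcP]
      ring
    · rw [hf, hg, div_add_div _ _ hb hd, map_add, map_mul, map_mul, map_mul]
    · funext x
      rw [hF, hG]
      simp only
      rw [tropMax_add hP0 hPadd (posPoly_mul hPmul hPadd haP hdP)
          (posPoly_mul hPmul hPadd hbP hcP),
        tropMax_mul hP0 hPmul hPadd haP hdP, tropMax_mul hP0 hPmul hPadd hbP hcP,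
        tropMax_mul hP0 hPmul hPadd hbP hdP, ← max_sub_sub_right]
      congr 1 <;> ring
  · rintro ⟨a, b, haP, hbP, hf, hF⟩ ⟨c, d, hcP, hdP, hg, hG⟩
    have hb : φ b ≠ 0 := fun h => hbP.1 (hinj (by rw [h, map_zero]))
    have hc : φ c ≠ 0 := fun h => hcP.1 (hinj (by rw [h, map_zero]))
    have hd : φ d ≠ 0 := fun h => hdP.1 (hinj (by rw [h, map_zero]))
    refine ⟨⟨a * c, b * d, posPoly_mul hPmul hPadd haP hcP, posPoly_mul hPmul hPadd hbP hdP,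
        ?_, ?_⟩,
      ⟨a * d, b * c, posPoly_mul hPmul hPadd haP hdP, posPoly_mul hPmul hPadd hbP hcP,
        ?_, ?_⟩,
      ⟨a * d + b * c, b * d, posPoly_add hP0 hPadd (posPoly_mul hPmul hPadd haP hdP)
          (posPoly_mul hPmul hPadd hbP hcP), posPoly_mul hPmul hPadd hbP hdP, ?_, ?_⟩⟩
    · rw [hf, hg, map_mul, map_mul, div_mul_div_comm]
    · funext x
      rw [hF, hG]
      simp only
      rw [tropMin_mul hP0 hPmul hPadd haP hcP, tropMin_mul hP0 hPmul hPadd hbP hdP]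
      ring
    · rw [hf, hg, map_mul, map_mul]
      field_simp
    · funext x
      rw [hF, hG]
      simp only
      rw [tropMin_mul hP0 hPmul hPadd haP hdP, tropMin_mul hP0 hPmul hPadd hbP hcP]
      ring
    · rw [hf, hg, div_add_div _ _ hb hd, map_add, map_mul, map_mul, map_mul]
    · funext x
      rw [hF, hG]
      simp only
      rw [tropMin_add hP0 hPadd (posPoly_mul hPmul hPadd haP hdP)
          (posPoly_mul hPmul hPadd hbP hcP),
        tropMin_mul hP0 hPmul hPadd haP hdP, tropMin_mul hP0 hPmul hPadd hbP hcP,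
        tropMin_mul hP0 hPmul hPadd hbP hdP, ← min_sub_sub_right]
      congr 1 <;> ring
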